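/- Let a, b, d, k, m, l be integers with a² − d·b² = k, gcd(a,b) = 1, and k dividing a·l + b·m. Then k divides m² − d·l². -/

import Mathlib

theorem gen_chakravala_div (a b d k m l : ℤ)
    (hk : a ^ 2 - d * b ^ 2 = k) (hcop : Int.gcd a b = 1)
    (hdvd : k ∣ a * l + b * m) :
    k ∣ m ^ 2 - d * l ^ 2 := by
  have hab : IsCoprime a b := Int.isCoprime_iff_gcd_eq_one.mpr hcop
  have hkb : IsCoprime k (b ^ 2) := by
    have : IsCoprime (a ^ 2) b := (hab.pow_left)
    have h2 : IsCoprime (a ^ 2 - d * b ^ 2) b := by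
      have := this.add_mul_right_left (-d * b)
      convert this using 1; rfl; ring
    rw [hk] at h2
    exact h2.pow_right
  have hdvd2 : k ∣ (m ^ 2 - d * l ^ 2) * b ^ 2 := by
    have : (m ^ 2 - d * l ^ 2) * b ^ 2 =
        k * l ^ 2 - (a * l + b * m) * (a * l - b * m) := by
      rw [← hk]; ring
    rw [this]
    exact dvd_sub (Dvd.intro _ rfl) (hdvd.mul_right _)
  exact hkb.dvd_of_dvd_mul_right hdvd2
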